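/- arXiv:1709.05519 — 5 statements merged into one kernel-verified Lean document; each statement's English description precedes it below -/
import Mathlib

section
/- Let C be a real symmetric positive definite n×n matrix, K ∈ ℝⁿ, and m ∈ ℝ with m − Kᵀ C⁻¹ K > 0. Let Cⁿᵉʷ be the (n+1)×(n+1) symmetric block matrix with upper-left block C, upper-right block K, lower-left block Kᵀ and lower-right entry m, and for B ∈ ℝⁿ and b ∈ ℝ let Bⁿᵉʷ := (B, b) ∈ ℝⁿ⁺¹. Then Cⁿᵉʷ is invertible and (Bⁿᵉʷ)ᵀ (Cⁿᵉʷ)⁻¹ Bⁿᵉʷ − Bᵀ C⁻¹ B = (b − Kᵀ C⁻¹ B)² / (m − Kᵀ C⁻¹ K). -/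
open Matrix

/-- For a real symmetric positive definite `C`, `K ∈ ℝⁿ`, `m ∈ ℝ`
with positive Schur complement `m − KᵀC⁻¹K > 0`, the block matrix
`Cⁿᵉʷ = [[C, K], [Kᵀ, m]]` is invertible and
`(Bⁿᵉʷ)ᵀ(Cⁿᵉʷ)⁻¹Bⁿᵉʷ − BᵀC⁻¹B = (b − KᵀC⁻¹B)² / (m − KᵀC⁻¹K)`,
where `Bⁿᵉʷ = (B, b)`. -/
theorem stmt_8 {n : ℕ} (C : Matrix (Fin n) (Fin n) ℝ)
    (hsymm : C.IsSymm) (hpd : C.PosDef)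
    (K : Fin n → ℝ) (m : ℝ) (hschur : 0 < m - K ⬝ᵥ (C⁻¹ *ᵥ K))
    (B : Fin n → ℝ) (b : ℝ)
    (Cnew : Matrix (Fin n ⊕ Fin 1) (Fin n ⊕ Fin 1) ℝ)
    (hCnew : Cnew = Matrix.fromBlocks C (fun i _ => K i) (fun _ j => K j) (fun _ _ => m))
    (Bnew : Fin n ⊕ Fin 1 → ℝ)
    (hBnew : Bnew = Sum.elim B (fun _ => b)) :
    IsUnit Cnew ∧
    Bnew ⬝ᵥ (Cnew⁻¹ *ᵥ Bnew) - B ⬝ᵥ (C⁻¹ *ᵥ B)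
      = (b - K ⬝ᵥ (C⁻¹ *ᵥ B)) ^ 2 / (m - K ⬝ᵥ (C⁻¹ *ᵥ K)) := by
  set v : Fin n → ℝ := C⁻¹ *ᵥ K with hv
  set s : ℝ := m - K ⬝ᵥ (C⁻¹ *ᵥ K) with hs
  have hs0 : s ≠ 0 := ne_of_gt hschur
  have hdet : IsUnit C.det := isUnit_iff_ne_zero.2 hpd.det_pos.ne'
  have hCC : C * C⁻¹ = 1 := Matrix.mul_nonsing_inv _ hdet
  have hCit : C⁻¹ᵀ = C⁻¹ := by
    rw [Matrix.transpose_nonsing_inv, hsymm.eq]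
  have hCv : C *ᵥ v = K := by
    rw [hv, Matrix.mulVec_mulVec, hCC, Matrix.one_mulVec]
  have hKC : ∀ w : Fin n → ℝ, K ⬝ᵥ (C⁻¹ *ᵥ w) = v ⬝ᵥ w := by
    intro w
    rw [Matrix.dotProduct_mulVec, hv, ← Matrix.mulVec_transpose, hCit]
  have hKv : K ⬝ᵥ v = m - s := by
    rw [hs, ← hv]; ring
  set M : Matrix (Fin n ⊕ Fin 1) (Fin n ⊕ Fin 1) ℝ :=
    Matrix.fromBlocks (C⁻¹ + s⁻¹ • vecMulVec v v) (Matrix.of fun i _ => -(s⁻¹) * v i)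
      (Matrix.of fun _ j => -(s⁻¹) * v j) (Matrix.of fun _ _ => s⁻¹) with hM
  have h1 : Cnew * M = 1 := by
    have e : Matrix.fromBlocks C (fun i _ => K i) (fun _ j => K j) (fun _ _ => m)
        = Matrix.fromBlocks C (Matrix.of fun i (_ : Fin 1) => K i) (Matrix.of fun (_ : Fin 1) j => K j)
          (Matrix.of fun (_ : Fin 1) (_ : Fin 1) => m) := rfl
    rw [hCnew, e, hM, Matrix.fromBlocks_multiply, ← Matrix.fromBlocks_one]
    ext i j
    rcases i with i | i <;> rcases j with j | j
    · simp only [Matrix.fromBlocks_apply₁₁, Matrix.add_apply, Matrix.mul_apply, Matrix.of_apply, Matrix.smul_apply,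
        vecMulVec_apply, smul_eq_mul, Fin.sum_univ_one]
      have h : ∑ k, C i k * (C⁻¹ k j + s⁻¹ * (v k * v j))
          = (C * C⁻¹) i j + s⁻¹ * ((C *ᵥ v) i * v j) := by
        rw [Matrix.mul_apply, Matrix.mulVec, dotProduct, Finset.sum_mul, Finset.mul_sum,
          ← Finset.sum_add_distrib]
        exact Finset.sum_congr rfl fun k _ => by ring
      rw [h, hCC, hCv]; ring
    · simp only [Matrix.fromBlocks_apply₁₂, Matrix.add_apply, Matrix.mul_apply, Matrix.of_apply,
        Fin.sum_univ_one, Matrix.zero_apply]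
      have h : ∑ k, C i k * (-(s⁻¹) * v k) = -(s⁻¹) * (C *ᵥ v) i := by
        rw [Matrix.mulVec, dotProduct, Finset.mul_sum]
        exact Finset.sum_congr rfl fun k _ => by ring
      rw [h, hCv]; ring
    · simp only [Matrix.fromBlocks_apply₂₁, Matrix.add_apply, Matrix.mul_apply, Matrix.of_apply, Matrix.smul_apply,
        vecMulVec_apply, smul_eq_mul, Fin.sum_univ_one, Matrix.zero_apply]
      have h : ∑ k, K k * (C⁻¹ k j + s⁻¹ * (v k * v j))
          = (C⁻¹ᵀ *ᵥ K) j + s⁻¹ * ((K ⬝ᵥ v) * v j) := by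
        rw [Matrix.mulVec_transpose, Matrix.vecMul, dotProduct, dotProduct,
          Finset.sum_mul, Finset.mul_sum, ← Finset.sum_add_distrib]
        exact Finset.sum_congr rfl fun k _ => by ring
      rw [h, hCit, ← hv, hKv]
      field_simp
      ring
    · simp only [Matrix.fromBlocks_apply₂₂, Matrix.add_apply, Matrix.mul_apply, Matrix.of_apply, Fin.sum_univ_one, Matrix.one_apply]
      have h : ∑ k, K k * (-(s⁻¹) * v k) = -(s⁻¹) * (K ⬝ᵥ v) := by
        rw [dotProduct, Finset.mul_sum]
        exact Finset.sum_congr rfl fun k _ => by ring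
      rw [h, hKv, if_pos (Subsingleton.elim i j)]
      field_simp
      ring
  have hinv : Cnew⁻¹ = M := Matrix.inv_eq_right_inv h1
  have hunit : IsUnit Cnew := by
    have hdet' : IsUnit Cnew.det := by
      have h := congrArg Matrix.det h1
      rw [Matrix.det_mul, Matrix.det_one] at h
      exact IsUnit.of_mul_eq_one _ h
    exact (Matrix.isUnit_iff_isUnit_det _).2 hdet'
  refine ⟨hunit, ?_⟩
  have hvv : vecMulVec v v *ᵥ B = (v ⬝ᵥ B) • v := by
    ext i
    simp only [Matrix.mulVec, dotProduct, vecMulVec_apply, Pi.smul_apply, smul_eq_mul]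
    rw [Finset.sum_mul]
    exact Finset.sum_congr rfl fun k _ => by ring
  have h4 : (Matrix.of fun i (_ : Fin 1) => -(s⁻¹) * v i) *ᵥ (fun _ => b)
      = (-(s⁻¹) * b) • v := by
    ext i
    simp only [Matrix.mulVec, dotProduct, Matrix.of_apply, Fin.sum_univ_one,
      Pi.smul_apply, smul_eq_mul]
    ring
  have h5 : (Matrix.of fun (_ : Fin 1) j => -(s⁻¹) * v j) *ᵥ B
      = fun _ => -(s⁻¹) * (v ⬝ᵥ B) := by
    ext i
    simp only [Matrix.mulVec, dotProduct, Matrix.of_apply]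
    rw [Finset.mul_sum]
    exact Finset.sum_congr rfl fun k _ => by ring
  have h6 : (Matrix.of fun (_ : Fin 1) (_ : Fin 1) => s⁻¹) *ᵥ (fun _ => b)
      = fun _ => s⁻¹ * b := by
    ext i
    simp [Matrix.mulVec, dotProduct, Fin.sum_univ_one]
  rw [hinv, hBnew, hM, Matrix.fromBlocks_mulVec, sumElim_dotProduct_sumElim]
  simp only [Sum.elim_comp_inl, Sum.elim_comp_inr, Matrix.add_mulVec,
    Matrix.smul_mulVec, hvv, h4, h5, h6, dotProduct_add, dotProduct_smul,
    smul_eq_mul]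
  have h7a : (fun (_ : Fin 1) => b) ⬝ᵥ (fun (_ : Fin 1) => -(s⁻¹) * (v ⬝ᵥ B))
      = b * (-(s⁻¹) * (v ⬝ᵥ B)) := by
    simp [dotProduct, Fin.sum_univ_one]
  have h7b : (fun (_ : Fin 1) => b) ⬝ᵥ (fun (_ : Fin 1) => s⁻¹ * b) = b * (s⁻¹ * b) := by
    simp [dotProduct, Fin.sum_univ_one]
  rw [h7a, h7b, hKC B, dotProduct_comm B v]
  field_simp
  ring
end

section
/- Let E be a real inner product space, L⁰ ∈ E, and let L₁, …, Lₙ₊₁ ∈ E be linearly independent. Define the Gram data A := ⟨L⁰, L⁰⟩, Bᵢ := ⟨Lᵢ, L⁰⟩ and Cᵢⱼ := ⟨Lᵢ, Lⱼ⟩ for i, j = 1, …, n, and Kᵢ := ⟨Lᵢ, Lₙ₊₁⟩ for i = 1, …, n. Let εₙ² be the infimum of ‖L⁰ − ∑ᵢ₌₁ⁿ vᵢ Lᵢ‖² over v ∈ ℝⁿ, and εₙ₊₁² the infimum of ‖L⁰ − ∑ᵢ₌₁ⁿ⁺¹ vᵢ Lᵢ‖² over v ∈ ℝⁿ⁺¹.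 Then εₙ² − εₙ₊₁² = (⟨Lₙ₊₁, L⁰⟩ − Kᵀ C⁻¹ B)² / (⟨Lₙ₊₁, Lₙ₊₁⟩ − Kᵀ C⁻¹ K), and if εₙ² > 0 the relative hedge contribution (εₙ² − εₙ₊₁²)/εₙ² lies in the interval [0, 1]. -/
open scoped RealInnerProductSpace
open Matrix

lemma inf_sq_proj {E : Type*} [NormedAddCommGroup E] [InnerProductSpace ℝ E] {m : ℕ}
    (x : E) (f : Fin m → E)
    [(Submodule.span ℝ (Set.range f)).HasOrthogonalProjection] :
    (⨅ v : Fin m → ℝ, ‖x - ∑ i, v i • f i‖ ^ 2)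
      = ‖x - ((Submodule.span ℝ (Set.range f)).orthogonalProjectionOnto x : E)‖ ^ 2 := by
  set S := Submodule.span ℝ (Set.range f)
  set p : E := (S.orthogonalProjectionOnto x : E) with hp
  have hpS : p ∈ S := (S.orthogonalProjectionOnto x).2
  obtain ⟨v0, hv0⟩ := (Submodule.mem_span_range_iff_exists_fun ℝ).1 hpS
  apply le_antisymm
  · calc (⨅ v : Fin m → ℝ, ‖x - ∑ i, v i • f i‖ ^ 2) ≤ ‖x - ∑ i, v0 i • f i‖ ^ 2 :=
        ciInf_le ⟨0, by rintro _ ⟨v, rfl⟩; positivity⟩ v0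
    _ = ‖x - p‖ ^ 2 := by rw [hv0]
  · refine le_ciInf fun v => ?_
    have hw : (∑ i, v i • f i) ∈ S :=
      (Submodule.mem_span_range_iff_exists_fun ℝ).2 ⟨v, rfl⟩
    have h1 : ‖x - p‖ ≤ ‖x - ∑ i, v i • f i‖ := by
      rw [hp, Submodule.coe_orthogonalProjectionOnto_apply, Submodule.starProjection_minimal]
      exact ciInf_le ⟨0, by rintro _ ⟨w, rfl⟩; positivity⟩ (⟨_, hw⟩ : S)
    exact pow_le_pow_left₀ (norm_nonneg _) h1 2

/-- For `L⁰ ∈ E` and linearly independent `L₁, …, Lₙ₊₁ ∈ E`, with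
Gram data `Bᵢ = ⟪Lᵢ, L⁰⟫`, `Cᵢⱼ = ⟪Lᵢ, Lⱼ⟫` (`i,j ≤ n`) and
`Kᵢ = ⟪Lᵢ, Lₙ₊₁⟫`, setting `εₙ² = inf_{v ∈ ℝⁿ} ‖L⁰ − ∑ᵢ₌₁ⁿ vᵢ Lᵢ‖²` and
`εₙ₊₁² = inf_{v ∈ ℝⁿ⁺¹} ‖L⁰ − ∑ᵢ₌₁ⁿ⁺¹ vᵢ Lᵢ‖²`, one has
`εₙ² − εₙ₊₁² = (⟪Lₙ₊₁, L⁰⟫ − KᵀC⁻¹B)² / (⟪Lₙ₊₁, Lₙ₊₁⟫ − KᵀC⁻¹K)`, and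
if `εₙ² > 0` the relative hedge contribution `(εₙ² − εₙ₊₁²)/εₙ²` lies in `[0,1]`. -/
theorem stmt_9 {E : Type*} [NormedAddCommGroup E] [InnerProductSpace ℝ E] {n : ℕ}
    (L0 : E) (L : Fin (n + 1) → E) (hL : LinearIndependent ℝ L)
    (B : Fin n → ℝ) (hB : ∀ i : Fin n, B i = ⟪L i.castSucc, L0⟫)
    (C : Matrix (Fin n) (Fin n) ℝ)
    (hC : ∀ i j : Fin n, C i j = ⟪L i.castSucc, L j.castSucc⟫)
    (K : Fin n → ℝ) (hK : ∀ i : Fin n, K i = ⟪L i.castSucc, L (Fin.last n)⟫)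
    (epsSqN epsSqNplus1 : ℝ)
    (hN : epsSqN = ⨅ v : Fin n → ℝ, ‖L0 - ∑ i : Fin n, v i • L i.castSucc‖ ^ 2)
    (hNplus1 : epsSqNplus1 = ⨅ v : Fin (n + 1) → ℝ, ‖L0 - ∑ i, v i • L i‖ ^ 2) :
    epsSqN - epsSqNplus1
      = (⟪L (Fin.last n), L0⟫ - K ⬝ᵥ (C⁻¹ *ᵥ B)) ^ 2
        / (⟪L (Fin.last n), L (Fin.last n)⟫ - K ⬝ᵥ (C⁻¹ *ᵥ K)) ∧
    (0 < epsSqN → (epsSqN - epsSqNplus1) / epsSqN ∈ Set.Icc (0 : ℝ) 1) := by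
  classical
  set g : Fin n → E := fun i => L i.castSucc with hg
  set Ln : E := L (Fin.last n) with hLndef
  set S := Submodule.span ℝ (Set.range g) with hS
  set T := Submodule.span ℝ (Set.range L) with hT
  haveI : FiniteDimensional ℝ S := FiniteDimensional.span_of_finite ℝ (Set.finite_range g)
  haveI : FiniteDimensional ℝ T := FiniteDimensional.span_of_finite ℝ (Set.finite_range L)
  -- basic memberships
  have hgS : ∀ i, g i ∈ S := fun i => Submodule.subset_span (Set.mem_range_self i)
  have hST : S ≤ T := Submodule.span_mono (by rintro _ ⟨i, rfl⟩; exact Set.mem_range_self _)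
  have hLnT : Ln ∈ T := Submodule.subset_span (Set.mem_range_self _)
  -- the projections
  set P : E := (S.orthogonalProjectionOnto L0 : E) with hPdef
  set PL : E := (S.orthogonalProjectionOnto Ln : E) with hPLdef
  have hPS : P ∈ S := (S.orthogonalProjectionOnto L0).2
  have hPLS : PL ∈ S := (S.orthogonalProjectionOnto Ln).2
  set M : E := Ln - PL with hM
  have hperpP : ∀ w ∈ S, ⟪L0 - P, w⟫ = 0 := Submodule.starProjection_inner_eq_zero L0
  have hperpM : ∀ w ∈ S, ⟪M, w⟫ = 0 := Submodule.starProjection_inner_eq_zero Ln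
  -- M ≠ 0
  have hB' : ∀ i : Fin n, B i = ⟪g i, L0⟫ := hB
  have hC' : ∀ i j : Fin n, C i j = ⟪g i, g j⟫ := hC
  have hK' : ∀ i : Fin n, K i = ⟪g i, Ln⟫ := hK
  have hLnS : Ln ∉ S := by
    have hr : Set.range g = L '' Set.range (Fin.castSucc (n := n)) :=
      Set.range_comp L Fin.castSucc
    have : Fin.last n ∉ Set.range (Fin.castSucc (n := n)) := by
      rintro ⟨j, hj⟩
      exact absurd hj (Fin.castSucc_lt_last j).ne
    simpa [hS, hr] using hL.notMem_span_image this
  have hM0 : M ≠ 0 := by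
    intro h
    rw [hM, sub_eq_zero] at h
    exact hLnS (h ▸ hPLS)
  have hMpos : 0 < ‖M‖ ^ 2 := pow_pos (norm_pos_iff.mpr hM0) 2
  have hMn : ‖M‖ ^ 2 ≠ 0 := ne_of_gt hMpos
  set c : ℝ := ⟪M, L0⟫ / ‖M‖ ^ 2 with hc
  set Q : E := P + c • M with hQ
  have hMT : M ∈ T := Submodule.sub_mem T hLnT (hST hPLS)
  have hQT : Q ∈ T := Submodule.add_mem T (hST hPS) (Submodule.smul_mem T c hMT)
  -- ⟪L0 - Q, ·⟫ vanishes on S, on M, hence on T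
  have hQS : ∀ w ∈ S, ⟪L0 - Q, w⟫ = 0 := by
    intro w hw
    have : L0 - Q = (L0 - P) - c • M := by rw [hQ]; abel
    rw [this, inner_sub_left, real_inner_smul_left, hperpP w hw, hperpM w hw]
    ring
  have hMP : ⟪M, P⟫ = 0 := hperpM P hPS
  have hLPM : ⟪L0 - P, M⟫ = ⟪M, L0⟫ := by
    rw [real_inner_comm, inner_sub_right, hMP, sub_zero]
  have hQM : ⟪L0 - Q, M⟫ = 0 := by
    have : L0 - Q = (L0 - P) - c • M := by rw [hQ]; abel
    rw [this, inner_sub_left, real_inner_smul_left, hLPM, real_inner_self_eq_norm_sq, hc]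
    field_simp
    ring
  have hQperp : ∀ w ∈ T, ⟪L0 - Q, w⟫ = 0 := by
    intro w hw
    induction hw using Submodule.span_induction with
    | mem x hx =>
      obtain ⟨i, rfl⟩ := hx
      rcases Fin.eq_castSucc_or_eq_last i with ⟨j, rfl⟩ | rfl
      · exact hQS (g j) (hgS j)
      · have : L (Fin.last n) = M + PL := by rw [hM]; abel
        rw [this, inner_add_right, hQM, hQS PL hPLS, add_zero]
    | zero => simp
    | add x y _ _ hx hy => rw [inner_add_right, hx, hy, add_zero]
    | smul r x _ hx => rw [real_inner_smul_right, hx, mul_zero]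
  have hQproj : (T.orthogonalProjectionOnto L0 : E) = Q :=
    Submodule.eq_starProjection_of_mem_of_inner_eq_zero hQT hQperp
  -- identify the two epsilons
  have heN : epsSqN = ‖L0 - P‖ ^ 2 := by rw [hN]; exact inf_sq_proj L0 g
  have heN1 : epsSqNplus1 = ‖L0 - Q‖ ^ 2 := by
    rw [hNplus1, inf_sq_proj L0 L]
    rw [show (((Submodule.span ℝ (Set.range L)).orthogonalProjectionOnto L0 : E)) = Q from hQproj]
  -- the Pythagoras computation
  have hkey : epsSqN - epsSqNplus1 = ⟪M, L0⟫ ^ 2 / ‖M‖ ^ 2 := by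
    have h1 : L0 - Q = (L0 - P) - c • M := by rw [hQ]; abel
    have hexp : ‖(L0 - P) - c • M‖ ^ 2
        = ‖L0 - P‖ ^ 2 - 2 * (c * ⟪M, L0⟫) + c ^ 2 * ‖M‖ ^ 2 := by
      rw [norm_sub_sq_real (L0 - P) (c • M), real_inner_smul_right, hLPM, norm_smul,
        mul_pow, Real.norm_eq_abs, sq_abs]
    rw [heN, heN1, h1, hexp, hc]
    field_simp
    ring
  -- matrix algebra: C is invertible
  have hLg : LinearIndependent ℝ g := hL.comp _ (Fin.castSucc_injective n)
  have hker : ∀ x : Fin n → ℝ, C *ᵥ x = 0 → x = 0 := by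
    intro x hx
    have hquad : x ⬝ᵥ (C *ᵥ x) = ⟪∑ i, x i • g i, ∑ j, x j • g j⟫ := by
      simp only [dotProduct, Matrix.mulVec, dotProduct, sum_inner, inner_sum,
        real_inner_smul_left, real_inner_smul_right, hC', Finset.mul_sum]
      refine Finset.sum_congr rfl fun i _ => Finset.sum_congr rfl fun j _ => by
        rw [real_inner_comm (g i) (g j)]; ring
    have hz : ‖∑ i, x i • g i‖ ^ 2 = 0 := by
      rw [← real_inner_self_eq_norm_sq, ← hquad, hx, dotProduct_zero]
    have hsum : ∑ i, x i • g i = 0 := by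
      have := pow_eq_zero_iff (n := 2) (by norm_num) |>.1 hz
      exact norm_eq_zero.1 this
    funext i
    exact Fintype.linearIndependent_iff.1 hLg x hsum i
  have hCunit : IsUnit C := by
    rw [← Matrix.mulVec_injective_iff_isUnit]
    intro x y hxy
    have : C *ᵥ (x - y) = 0 := by rw [Matrix.mulVec_sub, hxy, sub_self]
    have := hker _ this
    exact sub_eq_zero.1 this
  have hdet : IsUnit C.det := (Matrix.isUnit_iff_isUnit_det C).1 hCunit
  have hsolve : ∀ (w y : Fin n → ℝ), C *ᵥ w = y → C⁻¹ *ᵥ y = w := by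
    intro w y h
    rw [← h, Matrix.mulVec_mulVec, Matrix.nonsing_inv_mul C hdet, Matrix.one_mulVec]
  obtain ⟨p, hp⟩ := (Submodule.mem_span_range_iff_exists_fun ℝ).1 hPS
  obtain ⟨q, hq⟩ := (Submodule.mem_span_range_iff_exists_fun ℝ).1 hPLS
  have hinnerP : ∀ i, ⟪g i, P⟫ = ⟪g i, L0⟫ := by
    intro i
    have := hperpP (g i) (hgS i)
    rw [real_inner_comm] at this
    rw [inner_sub_right] at this
    linarith
  have hinnerPL : ∀ i, ⟪g i, PL⟫ = ⟪g i, Ln⟫ := by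
    intro i
    have := hperpM (g i) (hgS i)
    rw [real_inner_comm, hM, inner_sub_right] at this
    linarith
  have hCp : C *ᵥ p = B := by
    funext i
    rw [hB]
    calc (C *ᵥ p) i = ⟪g i, ∑ j, p j • g j⟫ := by
          simp only [Matrix.mulVec, dotProduct, inner_sum, real_inner_smul_right, hC']
          exact Finset.sum_congr rfl fun j _ => by ring
      _ = ⟪g i, L0⟫ := by rw [hp, hinnerP]
  have hCq : C *ᵥ q = K := by
    funext i
    rw [hK]
    calc (C *ᵥ q) i = ⟪g i, ∑ j, q j • g j⟫ := by
          simp only [Matrix.mulVec, dotProduct, inner_sum, real_inner_smul_right, hC']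
          exact Finset.sum_congr rfl fun j _ => by ring
      _ = ⟪g i, Ln⟫ := by rw [hq, hinnerPL]
  have hKp : K ⬝ᵥ (C⁻¹ *ᵥ B) = ⟪P, Ln⟫ := by
    rw [hsolve p B hCp, ← hp, sum_inner]
    simp only [dotProduct, real_inner_smul_left, hK']
    exact Finset.sum_congr rfl fun i _ => by ring
  have hKq : K ⬝ᵥ (C⁻¹ *ᵥ K) = ⟪PL, Ln⟫ := by
    rw [hsolve q K hCq, ← hq, sum_inner]
    simp only [dotProduct, real_inner_smul_left, hK']
    exact Finset.sum_congr rfl fun i _ => by ring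
  -- numerator and denominator
  have hnum : ⟪Ln, L0⟫ - ⟪P, Ln⟫ = ⟪M, L0⟫ := by
    have h1 : ⟪M, L0⟫ = ⟪Ln, L0⟫ - ⟪PL, L0⟫ := by rw [hM, inner_sub_left]
    have h2 : ⟪PL, L0⟫ = ⟪PL, P⟫ := by
      have := hperpP PL hPLS
      rw [real_inner_comm, inner_sub_right] at this
      linarith
    have h3 : ⟪P, Ln⟫ = ⟪P, PL⟫ := by
      have := hperpM P hPS
      rw [real_inner_comm, hM, inner_sub_right] at this
      linarith
    rw [h1, h2, h3, real_inner_comm PL P]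
  have hden : ⟪Ln, Ln⟫ - ⟪PL, Ln⟫ = ‖M‖ ^ 2 := by
    have h1 : ⟪M, Ln⟫ = ⟪Ln, Ln⟫ - ⟪PL, Ln⟫ := by rw [hM, inner_sub_left]
    have h2 : ⟪M, Ln⟫ = ‖M‖ ^ 2 := by
      have h3 : ⟪M, PL⟫ = 0 := hperpM PL hPLS
      have : ⟪M, Ln⟫ = ⟪M, M⟫ + ⟪M, PL⟫ := by
        rw [← inner_add_right]
        congr 1
        rw [hM]; abel
      rw [this, h3, add_zero, real_inner_self_eq_norm_sq]
    linarith
  have hmain : epsSqN - epsSqNplus1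
      = (⟪Ln, L0⟫ - K ⬝ᵥ (C⁻¹ *ᵥ B)) ^ 2 / (⟪Ln, Ln⟫ - K ⬝ᵥ (C⁻¹ *ᵥ K)) := by
    rw [hKp, hKq, hnum, hden, hkey]
  refine ⟨hmain, fun hpos => ?_⟩
  have hdiffnn : 0 ≤ epsSqN - epsSqNplus1 := by
    rw [hkey]; positivity
  have hE1nn : 0 ≤ epsSqNplus1 := by rw [heN1]; positivity
  constructor
  · exact div_nonneg hdiffnn hpos.le
  · rw [div_le_one hpos]; linarith
end

section
/- Let K > 0 be real and u ∈ ℂ with Re u > 1. Then the function x ↦ exp(−u·x)·(eˣ − K)⁺ is integrable on ℝ and ∫_ℝ exp(−u·x)·(eˣ − K)⁺ dx = K^{1−u} / (u(u − 1)), where K^{1−u} := exp((1 − u)·log K) with the real logarithm. -/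
open MeasureTheory Set Filter

lemma cexp_integrableOn_Ioi (a : ℝ) {c : ℂ} (hc : c.re < 0) :
    IntegrableOn (fun x : ℝ => Complex.exp (c * x)) (Ioi a) := by
  have h : IntegrableOn (fun x : ℝ => Real.exp (c.re * x)) (Ioi a) := by
    have := exp_neg_integrableOn_Ioi a (show 0 < -c.re by linarith)
    simpa [neg_neg] using this
  refine Integrable.mono' h
    ((Complex.continuous_exp.comp (by continuity)).aestronglyMeasurable) ?_
  filter_upwards with x
  simp [Complex.norm_exp, Complex.mul_re, Complex.ofReal_re, Complex.ofReal_im, le_refl]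

lemma cexp_integral_Ioi (a : ℝ) {c : ℂ} (hc : c.re < 0) :
    ∫ x : ℝ in Ioi a, Complex.exp (c * x) = -Complex.exp (c * a) / c := by
  have hc0 : c ≠ 0 := fun h => by simp [h] at hc
  have hderiv : ∀ x ∈ Ici a, HasDerivAt (fun x : ℝ => Complex.exp (c * x) / c)
      (Complex.exp (c * x)) x := by
    intro x _
    have h1 : HasDerivAt (fun z : ℂ => Complex.exp (c * z)) (Complex.exp (c * x) * c) x := by
      simpa [mul_comm, Function.comp_def] using
        (Complex.hasDerivAt_exp (c * x)).comp (x : ℂ) ((hasDerivAt_id (x : ℂ)).const_mul c)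
    have h2 := h1.comp_ofReal
    simpa [mul_div_assoc, mul_div_cancel_right₀ _ hc0] using h2.div_const c
  have htends : Tendsto (fun x : ℝ => Complex.exp (c * x) / c) atTop (nhds 0) := by
    have : Tendsto (fun x : ℝ => Complex.exp (c * x)) atTop (nhds 0) := by
      rw [tendsto_zero_iff_norm_tendsto_zero]
      have : ∀ x : ℝ, ‖Complex.exp (c * x)‖ = Real.exp (c.re * x) := by
        intro x; simp [Complex.norm_exp, Complex.mul_re, Complex.ofReal_re, Complex.ofReal_im]
      simp only [this]
      exact Real.tendsto_exp_atBot.comp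
        (Filter.Tendsto.const_mul_atTop_of_neg hc tendsto_id)
    simpa using this.div_const c
  have := integral_Ioi_of_hasDerivAt_of_tendsto' hderiv (cexp_integrableOn_Ioi a hc) htends
  rw [this]; ring

/-- Two-sided Laplace transform of the call payoff. For `K > 0`
and `u ∈ ℂ` with `Re u > 1`, the function `x ↦ exp(−ux)(eˣ − K)⁺` is
integrable on `ℝ` and
`∫ exp(−ux)(eˣ − K)⁺ dx = K^{1−u}/(u(u−1))`, with `K^{1−u} = exp((1−u) log K)`. -/
theorem stmt_16 (K : ℝ) (hK : 0 < K) (u : ℂ) (hu : 1 < u.re) :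
    Integrable (fun x : ℝ =>
      Complex.exp (-u * (x : ℂ)) * (max (Real.exp x - K) 0 : ℝ)) volume ∧
    ∫ x : ℝ, Complex.exp (-u * (x : ℂ)) * (max (Real.exp x - K) 0 : ℝ)
      = Complex.exp ((1 - u) * (Real.log K : ℂ)) / (u * (u - 1)) := by
  set L := Real.log K with hL
  have hre1 : ((1 : ℂ) - u).re < 0 := by simp [Complex.sub_re]; linarith
  have hre2 : (-u).re < 0 := by simp; linarith
  have hu0 : u ≠ 0 := fun h => by simp [h] at hu; linarith
  have hu1 : u ≠ 1 := fun h => by simp [h] at hu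
  set g : ℝ → ℂ := fun x => Complex.exp ((1 - u) * x) - K * Complex.exp (-u * x) with hg
  have hfg : (fun x : ℝ =>
      Complex.exp (-u * (x : ℂ)) * (max (Real.exp x - K) 0 : ℝ))
      = (Ioi L).indicator g := by
    funext x
    by_cases hx : x ∈ Ioi L
    · have hxK : K ≤ Real.exp x := by
        rw [← Real.exp_log hK]; exact (Real.exp_le_exp.mpr (le_of_lt hx))
      rw [indicator_of_mem hx]
      rw [max_eq_left (by linarith)]
      simp only [hg]
      push_cast
      rw [show (1 - u) * (x : ℂ) = (x : ℂ) + -u * x by ring, Complex.exp_add]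
      ring
    · have hxK : Real.exp x ≤ K := by
        simp only [mem_Ioi, not_lt] at hx
        calc Real.exp x ≤ Real.exp L := Real.exp_le_exp.mpr hx
          _ = K := Real.exp_log hK
      rw [indicator_of_notMem hx, max_eq_right (by linarith), Complex.ofReal_zero, mul_zero]
  have hint1 := cexp_integrableOn_Ioi L hre1
  have hint2 := (cexp_integrableOn_Ioi L hre2).const_mul (K : ℂ)
  have hgint : IntegrableOn g (Ioi L) := hint1.sub hint2
  have hintg : Integrable ((Ioi L).indicator g) volume :=
    (integrable_indicator_iff measurableSet_Ioi).mpr hgint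
  constructor
  · rw [hfg]; exact hintg
  · rw [hfg, integral_indicator measurableSet_Ioi]
    rw [integral_sub hint1 hint2, integral_const_mul,
      cexp_integral_Ioi L hre1, cexp_integral_Ioi L hre2]
    have hKL : (K : ℂ) = Complex.exp (L : ℂ) := by
      rw [← Complex.ofReal_exp, Real.exp_log hK]
    have hE : Complex.exp ((L : ℂ)) * Complex.exp (-u * ↑L) = Complex.exp ((1 - u) * ↑L) := by
      rw [← Complex.exp_add]; congr 1; ring
    have h2 : Complex.exp ((L : ℂ)) * (-Complex.exp (-u * ↑L) / -u)
        = Complex.exp ((1 - u) * ↑L) / u := by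
      rw [neg_div_neg_eq, ← mul_div_assoc, hE]
    rw [hKL, h2]
    have h1u : (1 : ℂ) - u ≠ 0 := sub_ne_zero.mpr (Ne.symm hu1)
    have hu1' : u - 1 ≠ 0 := sub_ne_zero.mpr hu1
    field_simp
    ring
end

section
/- Let K > 0 be real and u ∈ ℂ with Re u < 0. Then the function x ↦ exp(−u·x)·(K − eˣ)⁺ is integrable on ℝ and ∫_ℝ exp(−u·x)·(K − eˣ)⁺ dx = K^{1−u} / (u(u − 1)), where K^{1−u} := exp((1 − u)·log K) with the real logarithm. -/
open MeasureTheory Set Filter Topology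

lemma aux_norm_exp (c : ℂ) (x : ℝ) : ‖Complex.exp (c * x)‖ = Real.exp (c.re * x) := by
  rw [Complex.norm_exp]
  congr 1
  simp [Complex.mul_re]

lemma aux_exp_Iic (c : ℂ) (hc : 0 < c.re) (L : ℝ) :
    IntegrableOn (fun x : ℝ => Complex.exp (c * x)) (Iic L) volume ∧
    (∫ x in Iic L, Complex.exp (c * x)) = Complex.exp (c * L) / c := by
  have hc0 : c ≠ 0 := fun h => by simp [h] at hc
  have hre : c.re ≠ 0 := ne_of_gt hc
  have hcont : Continuous fun x : ℝ => Complex.exp (c * x) :=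
    Complex.continuous_exp.comp (continuous_const.mul Complex.continuous_ofReal)
  have htend0 : Tendsto (fun y : ℝ => Real.exp (c.re * y)) atBot (𝓝 0) :=
    Real.tendsto_exp_atBot.comp (Tendsto.const_mul_atBot hc tendsto_id)
  have key : ∀ y : ℝ, (∫ x in y..L, ‖Complex.exp (c * x)‖) =
      c.re⁻¹ * (Real.exp (c.re * L) - Real.exp (c.re * y)) := by
    intro y
    simp only [aux_norm_exp]
    rw [_root_.intervalIntegral.integral_comp_mul_left Real.exp hre]
    simp [integral_exp, mul_sub]
  have hint : IntegrableOn (fun x : ℝ => Complex.exp (c * x)) (Iic L) volume := by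
    refine integrableOn_Iic_of_intervalIntegral_norm_tendsto
      (c.re⁻¹ * Real.exp (c.re * L)) L (fun y => hcont.integrableOn_Ioc) (l := atBot)
      (a := id) tendsto_id ?_
    simp only [id, key]
    have hlim : Tendsto (fun y : ℝ => c.re⁻¹ * (Real.exp (c.re * L) - Real.exp (c.re * y)))
        atBot (𝓝 (c.re⁻¹ * (Real.exp (c.re * L) - 0))) :=
      (tendsto_const_nhds.sub htend0).const_mul _
    simpa using hlim
  refine ⟨hint, ?_⟩
  have D : ∀ x : ℝ, HasDerivAt (fun y : ℝ => Complex.exp (c * y) / c) (Complex.exp (c * x)) x := by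
    intro x
    rw [← mul_div_cancel_right₀ (Complex.exp (c * x)) hc0]
    apply ((Complex.hasDerivAt_exp _).comp x _).div_const c
    simpa only [mul_one, id] using ((hasDerivAt_id (x : ℂ)).const_mul _).comp_ofReal
  have htends : Tendsto (fun y : ℝ => Complex.exp (c * y) / c) atBot (𝓝 0) := by
    rw [tendsto_zero_iff_norm_tendsto_zero]
    have heq : (fun y : ℝ => ‖Complex.exp (c * y) / c‖) =
        fun y : ℝ => Real.exp (c.re * y) / ‖c‖ := by
      funext y; rw [norm_div, aux_norm_exp]
    rw [heq]
    simpa using htend0.div_const ‖c‖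
  have := integral_Iic_of_hasDerivAt_of_tendsto' (f := fun y : ℝ => Complex.exp (c * y) / c)
    (fun x _ => D x) hint htends
  rw [this, sub_zero]

/-- Two-sided Laplace transform of the put payoff. For `K > 0`
and `u ∈ ℂ` with `Re u < 0`, the function `x ↦ exp(−ux)(K − eˣ)⁺` is
integrable on `ℝ` and
`∫ exp(−ux)(K − eˣ)⁺ dx = K^{1−u}/(u(u−1))`, with `K^{1−u} = exp((1−u) log K)`. -/
theorem stmt_17 (K : ℝ) (hK : 0 < K) (u : ℂ) (hu : u.re < 0) :
    Integrable (fun x : ℝ =>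
      Complex.exp (-u * (x : ℂ)) * (max (K - Real.exp x) 0 : ℝ)) volume ∧
    ∫ x : ℝ, Complex.exp (-u * (x : ℂ)) * (max (K - Real.exp x) 0 : ℝ)
      = Complex.exp ((1 - u) * (Real.log K : ℂ)) / (u * (u - 1)) := by
  set L := Real.log K with hL
  have h1 : (0:ℝ) < (-u).re := by simp [hu]
  have h2 : (0:ℝ) < (1 - u).re := by simp; linarith
  have hu0 : u ≠ 0 := fun h => by simp [h] at hu
  have hu1 : u ≠ 1 := fun h => by rw [h] at hu; norm_num at hu
  have h10 : (1 : ℂ) - u ≠ 0 := sub_ne_zero.2 (Ne.symm hu1)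
  have hfun : (fun x : ℝ =>
      Complex.exp (-u * (x : ℂ)) * (max (K - Real.exp x) 0 : ℝ)) =
      (Iic L).indicator (fun x : ℝ =>
        (K : ℂ) * Complex.exp (-u * x) - Complex.exp ((1 - u) * x)) := by
    funext x
    by_cases hx : x ≤ L
    · rw [indicator_of_mem (mem_Iic.2 hx)]
      have hex : Real.exp x ≤ K := by
        rw [hL] at hx
        calc Real.exp x ≤ Real.exp (Real.log K) := Real.exp_le_exp.2 hx
        _ = K := Real.exp_log hK
      rw [max_eq_left (by linarith)]
      push_cast
      have hsplit : Complex.exp ((1 - u) * x) = Complex.exp (x : ℂ) * Complex.exp (-u * x) := by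
        rw [← Complex.exp_add]; ring_nf
      rw [hsplit]; ring
    · rw [indicator_of_notMem (by simpa using hx)]
      push_neg at hx
      have hex : K ≤ Real.exp x := by
        rw [hL] at hx
        calc K = Real.exp (Real.log K) := (Real.exp_log hK).symm
        _ ≤ Real.exp x := Real.exp_le_exp.2 hx.le
      rw [max_eq_right (by linarith)]
      simp
  have hI1 := aux_exp_Iic (-u) h1 L
  have hI2 := aux_exp_Iic (1 - u) h2 L
  have hIO : IntegrableOn (fun x : ℝ =>
      (K : ℂ) * Complex.exp (-u * x) - Complex.exp ((1 - u) * x)) (Iic L) volume :=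
    (hI1.1.const_mul _).sub hI2.1
  constructor
  · rw [hfun]
    exact (integrable_indicator_iff measurableSet_Iic).2 hIO
  · rw [hfun, integral_indicator measurableSet_Iic,
      integral_sub (hI1.1.const_mul _) hI2.1, integral_const_mul, hI1.2, hI2.2]
    have hK' : (K : ℂ) = Complex.exp (L : ℂ) := by
      rw [← Complex.ofReal_exp, hL, Real.exp_log hK]
    have hEE : Complex.exp (L : ℂ) * Complex.exp (-u * L) = Complex.exp ((1 - u) * L) := by
      rw [← Complex.exp_add]; ring_nf
    rw [hK', ← mul_div_assoc, hEE]
    have key : ∀ E : ℂ, E / (-u) - E / (1 - u) = E / (u * (u - 1)) := by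
      intro E
      rw [div_sub_div _ _ (neg_ne_zero.2 hu0) h10,
        div_eq_div_iff (mul_ne_zero (neg_ne_zero.2 hu0) h10)
          (mul_ne_zero hu0 (sub_ne_zero.2 hu1))]
      ring
    exact key _
end

section
/- Let μ be a probability measure on ℝ, R ∈ ℝ, and f : ℝ → ℝ a continuous function such that (i) x ↦ exp(−R·x)·f(x) is Lebesgue-integrable on ℝ, (ii) its Fourier-type transform 𝑓̂(y) := ∫_ℝ exp(−(R + iy)·x)·f(x) dx is Lebesgue-integrable in y over ℝ, and (iii) ∫ exp(R·x) dμ(x) < ∞. Then f is μ-integrable and ∫ f dμ = (1/2π) ∫_ℝ (∫ exp((R + iy)·x) dμ(x)) · 𝑓̂(y) dy. -/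
open MeasureTheory
open scoped FourierTransform

/-- Fourier pricing representation. Let `μ` be a probability
measure on `ℝ`, `R ∈ ℝ` and `f : ℝ → ℝ` continuous such that
(i) `x ↦ exp(−Rx) f(x)` is Lebesgue-integrable,
(ii) its transform `f̂(y) = ∫ exp(−(R+iy)x) f(x) dx` is integrable in `y`, and
(iii) `∫ exp(Rx) dμ < ∞`.  Then `f` is `μ`-integrable and
`∫ f dμ = (1/2π) ∫ (∫ exp((R+iy)x) dμ(x)) f̂(y) dy`. -/
theorem stmt_18 (μ : Measure ℝ) [IsProbabilityMeasure μ] (R : ℝ)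
    (f : ℝ → ℝ) (hf : Continuous f)
    (h1 : Integrable (fun x : ℝ => Real.exp (-R * x) * f x) volume)
    (fhat : ℝ → ℂ)
    (hfhat : ∀ y : ℝ,
      fhat y = ∫ x : ℝ, Complex.exp (-((R : ℂ) + (y : ℂ) * Complex.I) * (x : ℂ)) * (f x : ℂ))
    (h2 : Integrable fhat volume)
    (h3 : Integrable (fun x : ℝ => Real.exp (R * x)) μ) :
    Integrable f μ ∧
    ((∫ x, f x ∂μ : ℝ) : ℂ)
      = (1 / (2 * Real.pi)) *
        ∫ y : ℝ, (∫ x, Complex.exp (((R : ℂ) + (y : ℂ) * Complex.I) * (x : ℂ)) ∂μ) * fhat y := by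
  set g : ℝ → ℂ := fun x => ((Real.exp (-R * x) * f x : ℝ) : ℂ) with hg_def
  have hg_cont : Continuous g := Complex.continuous_ofReal.comp
    ((Real.continuous_exp.comp (continuous_const.mul continuous_id)).mul hf)
  have hg_int : Integrable g volume := h1.ofReal
  -- Fourier transform of g
  have hFg : ∀ ξ : ℝ, 𝓕 g ξ = fhat (2 * Real.pi * ξ) := by
    intro ξ
    rw [Real.fourier_real_eq_integral_exp_smul, hfhat]
    congr 1
    ext x
    rw [smul_eq_mul]
    simp only [hg_def]
    push_cast
    rw [← mul_assoc, ← Complex.exp_add]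
    ring_nf
  have hFg_int : Integrable (𝓕 g) volume := by
    have : Integrable (fun ξ : ℝ => fhat (2 * Real.pi * ξ)) volume :=
      h2.comp_mul_left' (by positivity)
    exact this.congr (Filter.Eventually.of_forall fun ξ => (hFg ξ).symm)
  have hinv := hg_cont.fourierInv_fourier_eq hg_int hFg_int
  -- pointwise representation of f
  have hkey : ∀ x : ℝ, (f x : ℂ)
      = (1 / (2 * Real.pi) : ℝ) *
        ∫ y : ℝ, Complex.exp (((R : ℂ) + (y : ℂ) * Complex.I) * (x : ℂ)) * fhat y := by
    intro x
    have h0 : g x = 𝓕⁻ (𝓕 g) x := by rw [hinv]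
    rw [Real.fourierInv_eq'] at h0
    simp only [RCLike.inner_apply, conj_trivial] at h0
    have h1' : (∫ ξ : ℝ, Complex.exp ((↑(2 * Real.pi * (x * ξ)) : ℂ) * Complex.I) • 𝓕 g ξ)
        = ∫ ξ : ℝ, (fun y : ℝ => Complex.exp ((y : ℂ) * (x : ℂ) * Complex.I) * fhat y)
            (2 * Real.pi * ξ) := by
      congr 1; ext ξ
      rw [hFg ξ, smul_eq_mul]
      push_cast
      ring_nf
    rw [h1'] at h0
    rw [MeasureTheory.Measure.integral_comp_mul_left
      (fun y : ℝ => Complex.exp ((y : ℂ) * (x : ℂ) * Complex.I) * fhat y) (2 * Real.pi)] at h0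
    -- h0 : g x = |(2π)⁻¹| • ∫ y, exp(i y x) * fhat y
    have habs : |(2 * Real.pi)⁻¹| = (2 * Real.pi)⁻¹ := abs_of_pos (by positivity)
    rw [habs] at h0
    -- now multiply by exp(R x)
    have hmul : (f x : ℂ) = Complex.exp ((R : ℂ) * x) * g x := by
      simp only [hg_def]
      push_cast
      rw [← mul_assoc, ← Complex.exp_add,
        show (R : ℂ) * x + -(R : ℂ) * x = 0 by ring, Complex.exp_zero, one_mul]
    rw [hmul, h0]
    rw [Complex.real_smul]
    push_cast
    rw [← mul_assoc, mul_comm (Complex.exp _) _, mul_assoc, ← integral_const_mul]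
    rw [one_div]
    congr 1
    congr 1; ext y
    rw [← mul_assoc, ← Complex.exp_add]
    ring_nf
  -- integrability of f wrt μ
  set C : ℝ := (1 / (2 * Real.pi)) * ∫ y : ℝ, ‖fhat y‖ with hC_def
  have hbound : ∀ x : ℝ, ‖f x‖ ≤ C * Real.exp (R * x) := by
    intro x
    have h0 : ‖(f x : ℂ)‖ = ‖f x‖ := Complex.norm_real _
    rw [← h0, hkey x]
    rw [norm_mul]
    have h4 : ‖((1 / (2 * Real.pi) : ℝ) : ℂ)‖ = 1 / (2 * Real.pi) := by
      rw [Complex.norm_real, Real.norm_eq_abs, abs_of_pos (by positivity)]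
    rw [h4]
    have h5 : ‖∫ y : ℝ, Complex.exp (((R : ℂ) + (y : ℂ) * Complex.I) * (x : ℂ)) * fhat y‖
        ≤ ∫ y : ℝ, Real.exp (R * x) * ‖fhat y‖ := by
      refine (norm_integral_le_integral_norm _).trans ?_
      refine integral_mono_of_nonneg (Filter.Eventually.of_forall fun y => norm_nonneg _)
        (h2.norm.const_mul _) (Filter.Eventually.of_forall fun y => ?_)
      show ‖Complex.exp (((R : ℂ) + (y : ℂ) * Complex.I) * (x : ℂ)) * fhat y‖
          ≤ Real.exp (R * x) * ‖fhat y‖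
      rw [norm_mul, Complex.norm_exp]
      have hre : (((R : ℂ) + (y : ℂ) * Complex.I) * (x : ℂ)).re = R * x := by
        simp only [Complex.add_re, Complex.mul_re, Complex.ofReal_re, Complex.ofReal_im,
          Complex.I_re, Complex.I_im, Complex.add_im, Complex.mul_im]
        ring
      rw [hre]
    calc 1 / (2 * Real.pi) * ‖∫ y : ℝ, Complex.exp (((R : ℂ) + (y : ℂ) * Complex.I) * (x : ℂ)) * fhat y‖
        ≤ 1 / (2 * Real.pi) * ∫ y : ℝ, Real.exp (R * x) * ‖fhat y‖ := by
          apply mul_le_mul_of_nonneg_left h5 (by positivity)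
      _ = C * Real.exp (R * x) := by
          rw [integral_const_mul, hC_def]; ring
  have hf_int : Integrable f μ := by
    refine Integrable.mono' (h3.const_mul C) hf.aestronglyMeasurable
      (Filter.Eventually.of_forall fun x => hbound x)
  refine ⟨hf_int, ?_⟩
  -- Fubini
  have hF_int : Integrable (fun p : ℝ × ℝ =>
      Complex.exp (((R : ℂ) + (p.2 : ℂ) * Complex.I) * (p.1 : ℂ)) * fhat p.2) (μ.prod volume) := by
    have hmeas : AEStronglyMeasurable (fun p : ℝ × ℝ =>
        Complex.exp (((R : ℂ) + (p.2 : ℂ) * Complex.I) * (p.1 : ℂ)) * fhat p.2) (μ.prod volume) := by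
      refine AEStronglyMeasurable.mul ?_ ?_
      · refine (Complex.continuous_exp.comp ?_).aestronglyMeasurable
        exact (continuous_const.add ((Complex.continuous_ofReal.comp continuous_snd).mul
          continuous_const)).mul (Complex.continuous_ofReal.comp continuous_fst)
      · exact h2.aestronglyMeasurable.comp_snd
    refine Integrable.mono' (h3.mul_prod h2.norm) hmeas
      (Filter.Eventually.of_forall fun p => ?_)
    show ‖Complex.exp (((R : ℂ) + (p.2 : ℂ) * Complex.I) * (p.1 : ℂ)) * fhat p.2‖
        ≤ Real.exp (R * p.1) * ‖fhat p.2‖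
    rw [norm_mul, Complex.norm_exp]
    have hre : (((R : ℂ) + (p.2 : ℂ) * Complex.I) * (p.1 : ℂ)).re = R * p.1 := by
      simp only [Complex.add_re, Complex.mul_re, Complex.ofReal_re, Complex.ofReal_im,
        Complex.I_re, Complex.I_im, Complex.add_im, Complex.mul_im]
      ring
    rw [hre]
  have hswap := integral_integral_swap (f := fun x y : ℝ =>
    Complex.exp (((R : ℂ) + (y : ℂ) * Complex.I) * (x : ℂ)) * fhat y) hF_int
  have hswap' := hswap
  beta_reduce at hswap'
  calc ((∫ x, f x ∂μ : ℝ) : ℂ) = ∫ x : ℝ, ((f x : ℝ) : ℂ) ∂μ := (integral_ofReal).symm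
    _ = ∫ x : ℝ, (((1 / (2 * Real.pi) : ℝ) : ℂ) *
          ∫ y : ℝ, Complex.exp (((R : ℂ) + (y : ℂ) * Complex.I) * (x : ℂ)) * fhat y) ∂μ := by
        exact integral_congr_ae (Filter.Eventually.of_forall fun x => hkey x)
    _ = ((1 / (2 * Real.pi) : ℝ) : ℂ) *
          ∫ x : ℝ, (∫ y : ℝ, Complex.exp (((R : ℂ) + (y : ℂ) * Complex.I) * (x : ℂ)) * fhat y) ∂μ := by
        rw [integral_const_mul]
    _ = ((1 / (2 * Real.pi) : ℝ) : ℂ) *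
          ∫ y : ℝ, (∫ x : ℝ, Complex.exp (((R : ℂ) + (y : ℂ) * Complex.I) * (x : ℂ)) * fhat y ∂μ) := by
        exact congrArg (((1 / (2 * Real.pi) : ℝ) : ℂ) * ·) hswap'
    _ = (1 / (2 * Real.pi)) *
          ∫ y : ℝ, (∫ x, Complex.exp (((R : ℂ) + (y : ℂ) * Complex.I) * (x : ℂ)) ∂μ) * fhat y := by
        push_cast
        congr 1
        refine integral_congr_ae (Filter.Eventually.of_forall fun y => ?_)
        beta_reduce
        rw [integral_mul_const]
end
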